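/- For every prime p and every multiset I of elements of (ZMod p)^3 with |I| = 8p - 3, there exists a sub-multiset of I of cardinality 4p whose sum is 0. -/

import Mathlib

set_option linter.unusedSectionVars false

namespace Stmt2

open AddMonoidAlgebra

variable {p k : ℕ} [hp : Fact p.Prime]

local notation "R" => AddMonoidAlgebra (ZMod p) (Fin k → ZMod p)

noncomputable def tt (g : Fin k → ZMod p) : R := 1 - AddMonoidAlgebra.single g 1

instance : CharP (AddMonoidAlgebra (ZMod p) (Fin k → ZMod p)) p :=
  charP_of_injective_ringHom (f := AddMonoidAlgebra.singleZeroRingHom)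
    (fun a b h => AddMonoidAlgebra.single_right_injective (m := (0 : Fin k → ZMod p)) h) p

lemma tt_pow_p (g : Fin k → ZMod p) : (tt g : R) ^ p = 0 := by
  have h1 : (AddMonoidAlgebra.single g (1 : ZMod p)) ^ p = 1 := by
    rw [AddMonoidAlgebra.single_pow]
    have : p • g = 0 := by
      funext i
      simp [ZMod.natCast_self, nsmul_eq_mul]
    rw [this, one_pow, ← AddMonoidAlgebra.one_def]
  rw [tt, sub_pow_char, one_pow, h1, sub_self]

/-- the basis elements -/
noncomputable def ee (i : Fin k) : Fin k → ZMod p := Pi.single i 1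

noncomputable def genIdeal (p k : ℕ) [Fact p.Prime] :
    Ideal (AddMonoidAlgebra (ZMod p) (Fin k → ZMod p)) :=
  Ideal.span (Set.range fun i : Fin k => (1 - AddMonoidAlgebra.single (ee i) 1 :
    AddMonoidAlgebra (ZMod p) (Fin k → ZMod p)))

lemma tt_add (a b : Fin k → ZMod p) :
    (tt (a + b) : R) = tt a + AddMonoidAlgebra.single a 1 * tt b := by
  simp only [tt, mul_sub, mul_one, AddMonoidAlgebra.single_mul_single, one_mul]
  ring

lemma tt_mem (g : Fin k → ZMod p) : (tt g : R) ∈ genIdeal p k := by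
  -- additive submonoid of elements g with tt g ∈ I
  let A : AddSubmonoid (Fin k → ZMod p) :=
    { carrier := {g | (tt g : R) ∈ genIdeal p k}
      zero_mem' := by
        have : (tt 0 : R) = 0 := by
          simp [tt, ← AddMonoidAlgebra.one_def]
        simp [Set.mem_setOf_eq, this]
      add_mem' := by
        intro a b ha hb
        simp only [Set.mem_setOf_eq] at *
        rw [tt_add]
        exact add_mem ha (Ideal.mul_mem_left _ _ hb) }
  have hgen : ∀ i : Fin k, ee i ∈ A := by
    intro i
    exact Ideal.subset_span (Set.mem_range_self i)
  have : g = ∑ i : Fin k, (g i).val • ee (p := p) i := by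
    funext j
    simp only [Finset.sum_apply, ee, Pi.smul_apply, Pi.single_apply, smul_eq_mul]
    rw [Finset.sum_eq_single j]
    · simp [ZMod.natCast_val, ZMod.cast_id]
    · intro b _ hb
      rw [if_neg (fun h => hb h.symm), smul_zero]
    · intro h; exact absurd (Finset.mem_univ j) h
  rw [this]
  exact AddSubmonoid.sum_mem A (fun i _ => AddSubmonoid.nsmul_mem A (hgen i) _)

end Stmt2

namespace Stmt2

open AddMonoidAlgebra Pointwise

variable {p k : ℕ} [hp : Fact p.Prime]

local notation "R" => AddMonoidAlgebra (ZMod p) (Fin k → ZMod p)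

/-- products of n elements of the ideal lie in the n-th power -/
lemma prod_mem_pow (l : Multiset R) (h : ∀ x ∈ l, x ∈ genIdeal p k) :
    l.prod ∈ (genIdeal p k) ^ (Multiset.card l) := by
  induction l using Multiset.induction with
  | empty => simp
  | cons a s ih =>
      rw [Multiset.prod_cons, Multiset.card_cons, pow_succ']
      exact Ideal.mul_mem_mul (h a (Multiset.mem_cons_self a s))
        (ih (fun x hx => h x (Multiset.mem_cons_of_mem hx)))

/-- n-fold products of generators -/
def genProds (p k n : ℕ) [Fact p.Prime] : Set (AddMonoidAlgebra (ZMod p) (Fin k → ZMod p)) :=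
  {x | ∃ s : Multiset (Fin k), Multiset.card s = n ∧
    x = (s.map (fun i => (1 - AddMonoidAlgebra.single (ee i) 1 :
      AddMonoidAlgebra (ZMod p) (Fin k → ZMod p)))).prod}

lemma pow_le_span_genProds (n : ℕ) :
    (genIdeal p k) ^ n ≤ Ideal.span (genProds p k n) := by
  induction n with
  | zero =>
      rw [pow_zero]
      have : (1 : R) ∈ genProds p k 0 := ⟨0, by simp⟩
      rw [Ideal.one_eq_top]
      intro x _
      have h1 : Ideal.span {(1:R)} ≤ Ideal.span (genProds p k 0) :=
        Ideal.span_mono (Set.singleton_subset_iff.mpr this)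
      apply h1
      rw [Ideal.span_singleton_one]
      trivial
  | succ n ih =>
      rw [pow_succ]
      calc (genIdeal p k) ^ n * genIdeal p k
          ≤ Ideal.span (genProds p k n) * Ideal.span (Set.range fun i : Fin k =>
              (1 - AddMonoidAlgebra.single (ee i) 1 : R)) :=
            Ideal.mul_mono ih le_rfl
        _ = Ideal.span ((genProds p k n) * (Set.range fun i : Fin k =>
              (1 - AddMonoidAlgebra.single (ee i) 1 : R))) := Ideal.span_mul_span' _ _
        _ ≤ Ideal.span (genProds p k (n+1)) := by
            apply Ideal.span_mono
            rintro x ⟨a, ha, b, hb, rfl⟩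
            obtain ⟨s, hs, rfl⟩ := ha
            obtain ⟨i, rfl⟩ := hb
            exact ⟨i ::ₘ s, by simp [hs], by rw [Multiset.map_cons, Multiset.prod_cons]; ring⟩

lemma genProds_eq_zero {n : ℕ} (hn : k * (p - 1) < n) (x : R) (hx : x ∈ genProds p k n) :
    x = 0 := by
  obtain ⟨s, hs, rfl⟩ := hx
  -- pigeonhole: some i has count ≥ p
  have hex : ∃ i : Fin k, p ≤ s.count i := by
    by_contra hc
    push_neg at hc
    have hcard : Multiset.card s = ∑ a ∈ s.toFinset, s.count a :=
      (Multiset.toFinset_sum_count_eq s).symm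
    have hle : ∑ a ∈ s.toFinset, s.count a ≤ ∑ _a ∈ (Finset.univ : Finset (Fin k)), (p - 1) := by
      apply Finset.sum_le_sum_of_subset_of_nonneg (Finset.subset_univ _) (by intros; positivity)
        |>.trans
      apply Finset.sum_le_sum
      intro i _
      have := hc i
      omega
    simp only [Finset.sum_const, Finset.card_univ, Fintype.card_fin, smul_eq_mul] at hle
    omega
  obtain ⟨i, hi⟩ := hex
  have hrep : Multiset.replicate p i ≤ s := by
    rw [Multiset.le_iff_count]
    intro a
    rw [Multiset.count_replicate]
    split
    · next h => subst h; exact hi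
    · omega
  obtain ⟨u, rfl⟩ : ∃ u, s = Multiset.replicate p i + u :=
    ⟨s - Multiset.replicate p i, by rw [add_tsub_cancel_of_le hrep]⟩
  rw [Multiset.map_add, Multiset.prod_add, Multiset.map_replicate, Multiset.prod_replicate]
  have : (1 - AddMonoidAlgebra.single (ee i) 1 : R) ^ p = 0 := tt_pow_p (ee i)
  rw [this, zero_mul]

lemma ideal_pow_eq_bot {n : ℕ} (hn : k * (p - 1) < n) : (genIdeal p k) ^ n = ⊥ := by
  apply le_antisymm _ bot_le
  refine (pow_le_span_genProds n).trans ?_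
  have : genProds p k n ⊆ {(0 : R)} := fun x hx => genProds_eq_zero hn x hx
  refine (Ideal.span_mono this).trans ?_
  simp [Ideal.span_le]

/-- Olson-type theorem: long products of 1 - X^g vanish -/
theorem olson_prod (l : Multiset (Fin k → ZMod p)) (hl : k * (p - 1) < Multiset.card l) :
    (l.map (fun g => (1 - AddMonoidAlgebra.single g 1 : R))).prod = 0 := by
  have h1 : (l.map (fun g => (1 - AddMonoidAlgebra.single g 1 : R))).prod
      ∈ (genIdeal p k) ^ (Multiset.card l) := by
    have := prod_mem_pow (p := p) (k := k) (l.map (fun g => (1 - AddMonoidAlgebra.single g 1 : R)))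
      (by
        intro x hx
        obtain ⟨g, _, rfl⟩ := Multiset.mem_map.mp hx
        exact tt_mem g)
    rwa [Multiset.card_map] at this
  rw [ideal_pow_eq_bot hl] at h1
  exact Ideal.mem_bot.mp h1

end Stmt2

namespace Stmt2
open AddMonoidAlgebra

variable {p k : ℕ} [hp : Fact p.Prime]

local notation "R" => AddMonoidAlgebra (ZMod p) (Fin k → ZMod p)

theorem key_identity {ι : Type} [DecidableEq ι] (v : ι → (Fin k → ZMod p)) (W : Finset ι)
    (hW : k * (p - 1) < W.card) :
    (∑ S ∈ W.powerset, if (∑ i ∈ S, v i) = 0 then ((-1 : ZMod p)) ^ S.card else 0) = 0 := by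
  have h0 : (∏ i ∈ W, (1 - AddMonoidAlgebra.single (v i) 1 : R)) = 0 := by
    rw [Finset.prod_eq_multiset_prod]
    have := olson_prod (p := p) (k := k) (W.val.map v)
      (by rwa [Multiset.card_map, Finset.card_def] at *)
    rwa [Multiset.map_map] at this
  have hexp : (∏ i ∈ W, (1 - AddMonoidAlgebra.single (v i) 1 : R))
      = ∑ S ∈ W.powerset, AddMonoidAlgebra.single (∑ i ∈ S, v i) ((-1 : ZMod p) ^ S.card) := by
    have : ∀ i ∈ W, (1 - AddMonoidAlgebra.single (v i) 1 : R)
        = (-AddMonoidAlgebra.single (v i) 1) + 1 := by intros; ring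
    rw [Finset.prod_congr rfl this, Finset.prod_add]
    apply Finset.sum_congr rfl
    intro S hS
    rw [Finset.prod_const_one, mul_one]
    have h1 : ∀ i ∈ S, (-AddMonoidAlgebra.single (v i) 1 : R)
        = (AddMonoidAlgebra.single 0 (-1 : ZMod p)) * AddMonoidAlgebra.single (v i) 1 := by
      intro i _
      rw [AddMonoidAlgebra.single_mul_single, zero_add, neg_one_mul]
      ext; simp [AddMonoidAlgebra.coeff_neg, Finsupp.single_neg]
    rw [Finset.prod_congr rfl h1, Finset.prod_mul_distrib, Finset.prod_const,
      AddMonoidAlgebra.prod_single, Finset.prod_const_one]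
    rw [AddMonoidAlgebra.single_pow, AddMonoidAlgebra.single_mul_single]
    simp
  rw [hexp] at h0
  have happ := congrArg (fun r : R => r.coeff 0) h0
  simp only [AddMonoidAlgebra.coeff_zero, Finsupp.coe_zero, Pi.zero_apply] at happ
  rw [show ((∑ S ∈ W.powerset, AddMonoidAlgebra.single (∑ i ∈ S, v i)
      ((-1 : ZMod p) ^ S.card)).coeff 0 : ZMod p)
    = ∑ S ∈ W.powerset, (AddMonoidAlgebra.single (∑ i ∈ S, v i)
      ((-1 : ZMod p) ^ S.card)).coeff 0 by
        rw [AddMonoidAlgebra.coeff_sum, Finsupp.finset_sum_apply]]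
    at happ
  calc (∑ S ∈ W.powerset, if (∑ i ∈ S, v i) = 0 then ((-1 : ZMod p)) ^ S.card else 0)
      = ∑ S ∈ W.powerset, (AddMonoidAlgebra.single (∑ i ∈ S, v i)
          ((-1 : ZMod p) ^ S.card)).coeff 0 :=
        Finset.sum_congr rfl (fun S _ => (Finsupp.single_apply).symm)
    _ = 0 := happ

end Stmt2

namespace Stmt2

variable {p : ℕ} [hp : Fact p.Prime]

local notation "G" => (Fin 3 → ZMod p)

lemma sum_snoc_eq_zero_iff {ι : Type} [DecidableEq ι] (v : ι → G) (S : Finset ι) :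
    (∑ i ∈ S, (Fin.snoc (v i) 1 : Fin 4 → ZMod p)) = 0
      ↔ ((∑ i ∈ S, v i) = 0 ∧ ((S.card : ZMod p) = 0)) := by
  constructor
  · intro h
    constructor
    · funext j
      have := congrFun h (Fin.castSucc j)
      rw [Finset.sum_apply] at this
      simp only [Fin.snoc_castSucc] at this
      rw [Finset.sum_apply]
      simpa using this
    · have := congrFun h (Fin.last 3)
      rw [Finset.sum_apply] at this
      simp only [Fin.snoc_last] at this
      rw [Finset.sum_const] at this
      simpa [nsmul_eq_mul] using this
  · rintro ⟨h1, h2⟩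
    funext j
    induction j using Fin.lastCases with
    | last =>
      rw [Finset.sum_apply]
      simp only [Fin.snoc_last]
      rw [Finset.sum_const]
      simpa [nsmul_eq_mul] using h2
    | cast j' =>
      rw [Finset.sum_apply]
      simp only [Fin.snoc_castSucc]
      have := congrFun h1 j'
      rw [Finset.sum_apply] at this
      simpa using this

theorem zs_identity {ι : Type} [DecidableEq ι] (v : ι → G) (W : Finset ι)
    (hW : 4 * (p - 1) < W.card) :
    (∑ S ∈ W.powerset, if ((∑ i ∈ S, v i) = 0 ∧ ((S.card : ZMod p) = 0))
      then ((-1 : ZMod p)) ^ S.card else 0) = 0 := by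
  have h := key_identity (k := 4) (fun i => (Fin.snoc (v i) 1 : Fin 4 → ZMod p)) W hW
  calc (∑ S ∈ W.powerset, if ((∑ i ∈ S, v i) = 0 ∧ ((S.card : ZMod p) = 0))
        then ((-1 : ZMod p)) ^ S.card else 0)
      = ∑ S ∈ W.powerset, if (∑ i ∈ S, (Fin.snoc (v i) 1 : Fin 4 → ZMod p)) = 0
          then ((-1 : ZMod p)) ^ S.card else 0 :=
        Finset.sum_congr rfl (fun S _ => if_congr (sum_snoc_eq_zero_iff v S).symm rfl rfl)
    _ = 0 := h

end Stmt2

namespace Stmt2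

variable {p : ℕ} [hp : Fact p.Prime]

local notation "G" => (Fin 3 → ZMod p)

lemma neg_one_pow_3p : ((-1 : ZMod p)) ^ (3 * p) = -1 := by
  haveI : CharP (ZMod p) p := ZMod.charP p
  rw [mul_comm, pow_mul, neg_one_pow_char (ZMod p) p]
  ring

/-- existence of nonempty zero-sums with p ∣ card in any window of size > 4(p-1) -/
theorem exists_zerosum {ι : Type} [DecidableEq ι] (v : ι → G) (W : Finset ι)
    (hW : 4 * (p - 1) < W.card) :
    ∃ S : Finset ι, S ⊆ W ∧ S ≠ ∅ ∧ (∑ i ∈ S, v i) = 0 ∧ p ∣ S.card := by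
  by_contra hcon
  push_neg at hcon
  have h := zs_identity v W hW
  have heq : ∀ S ∈ W.powerset,
      (if ((∑ i ∈ S, v i) = 0 ∧ ((S.card : ZMod p) = 0)) then ((-1 : ZMod p)) ^ S.card else 0)
      = if S = ∅ then 1 else 0 := by
    intro S hS
    rw [Finset.mem_powerset] at hS
    by_cases hSe : S = ∅
    · subst hSe; simp
    · rw [if_neg hSe]
      apply if_neg
      rintro ⟨h1, h2⟩
      exact hcon S hS (Finset.nonempty_iff_ne_empty.mpr hSe) h1 ((ZMod.natCast_eq_zero_iff _ _).mp h2)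
  rw [Finset.sum_congr rfl heq] at h
  rw [Finset.sum_ite_eq' W.powerset ∅ (fun _ => (1 : ZMod p))] at h
  rw [if_pos (Finset.empty_mem_powerset W)] at h
  haveI : Fact (1 < p) := ⟨hp.out.one_lt⟩
  exact one_ne_zero h

/-- the μ-relation: if all p-divisible zero-sums in W have card 0 or 3p, then
  the number of card-3p zero-sums is ≡ 1 mod p. -/
theorem mu_relation {ι : Type} [DecidableEq ι] (v : ι → G) (W : Finset ι)
    (hW : 4 * (p - 1) < W.card)
    (hclass : ∀ S : Finset ι, S ⊆ W → (∑ i ∈ S, v i) = 0 → p ∣ S.card →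
      S.card = 0 ∨ S.card = 3 * p) :
    (((W.powerset.filter (fun S => (∑ i ∈ S, v i) = 0 ∧ S.card = 3 * p)).card : ZMod p)) = 1 := by
  have h := zs_identity v W hW
  have heq : ∀ S ∈ W.powerset,
      (if ((∑ i ∈ S, v i) = 0 ∧ ((S.card : ZMod p) = 0)) then ((-1 : ZMod p)) ^ S.card else 0)
      = (if S = ∅ then 1 else 0)
        + (if ((∑ i ∈ S, v i) = 0 ∧ S.card = 3 * p) then ((-1 : ZMod p)) ^ (3 * p) else 0) := by
    intro S hS
    rw [Finset.mem_powerset] at hS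
    by_cases hSe : S = ∅
    · subst hSe
      rw [if_pos (⟨by simp, by simp⟩ : ((∑ i ∈ (∅ : Finset ι), v i) = 0
          ∧ (((∅ : Finset ι).card : ZMod p) = 0))), if_pos rfl, if_neg]
      · simp
      · rintro ⟨-, hc⟩
        simp only [Finset.card_empty] at hc
        have := hp.out.pos
        omega
    · rw [if_neg hSe]
      by_cases hz : ((∑ i ∈ S, v i) = 0 ∧ ((S.card : ZMod p) = 0))
      · have h3 : S.card = 3 * p := by
          rcases hclass S hS hz.1 ((ZMod.natCast_eq_zero_iff _ _).mp hz.2) with h0 | h3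
          · exact absurd (Finset.card_eq_zero.mp h0) hSe
          · exact h3
        rw [if_pos hz, if_pos ⟨hz.1, h3⟩, h3, zero_add]
      · rw [if_neg hz, if_neg, zero_add]
        rintro ⟨h1, h2⟩
        exact hz ⟨h1, by rw [h2]; simp⟩
  rw [Finset.sum_congr rfl heq, Finset.sum_add_distrib] at h
  rw [Finset.sum_ite_eq' W.powerset ∅ (fun _ => (1 : ZMod p)),
    if_pos (Finset.empty_mem_powerset W)] at h
  rw [← Finset.sum_filter, Finset.sum_const, neg_one_pow_3p, nsmul_eq_mul] at h
  linear_combination -h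

end Stmt2

namespace Stmt2

variable {p : ℕ} [hp : Fact p.Prime]

local notation "G" => (Fin 3 → ZMod p)

/-- under the no-p/2p hypothesis there is no zero-sum of size 4p either -/
lemma no4p {ι : Type} [DecidableEq ι] (v : ι → G)
    (hno : ∀ S : Finset ι, (∑ i ∈ S, v i) = 0 → S.card ≠ p ∧ S.card ≠ 2 * p)
    (S4 : Finset ι) (h40 : (∑ i ∈ S4, v i) = 0) (h4c : S4.card = 4 * p) : False := by
  have hp2 : 2 ≤ p := hp.out.two_le
  obtain ⟨W, hWsub, hWcard⟩ := Finset.exists_subset_card_eq (s := S4) (n := 4 * p - 3)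
    (by omega)
  obtain ⟨S, hSW, hSne, hS0, hSd⟩ := exists_zerosum v W (by omega)
  obtain ⟨j, hj⟩ := hSd
  have hSle : S.card ≤ 4 * p - 3 := hWcard ▸ Finset.card_le_card hSW
  have hSpos : 0 < S.card := Finset.card_pos.mpr (Finset.nonempty_iff_ne_empty.mpr hSne)
  have hj3 : j = 1 ∨ j = 2 ∨ j = 3 := by
    rcases Nat.lt_or_ge j 4 with h4 | h4
    · interval_cases j <;> omega
    · exfalso
      have h5 : p * 4 ≤ p * j := Nat.mul_le_mul_left p h4
      omega
  rcases hj3 with rfl | rfl | rfl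
  · exact (hno S hS0).1 (by omega)
  · exact (hno S hS0).2 (by omega)
  · -- complement inside S4 has card p and sum 0
    have hSsub4 : S ⊆ S4 := hSW.trans hWsub
    have hcs : (S4 \ S).card = p := by
      rw [Finset.card_sdiff_of_subset hSsub4]
      omega
    have hsum : (∑ i ∈ S4 \ S, v i) = 0 := by
      have := Finset.sum_sdiff_eq_sub (f := v) hSsub4
      rw [this, hS0, h40, sub_zero]
    exact (hno _ hsum).1 hcs

end Stmt2

namespace Stmt2

variable {p : ℕ} [hp : Fact p.Prime]

lemma choose_cast (a r : ℕ) (hr : r < p) :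
    (((a * p + r).choose p : ℕ) : ZMod p) = (a : ZMod p) := by
  induction a with
  | zero => simp [Nat.choose_eq_zero_of_lt (by omega : r < p)]
  | succ a ih =>
      have hsplit : (a + 1) * p + r = p + (a * p + r) := by ring
      rw [hsplit, Nat.add_choose_eq, Nat.cast_sum]
      have hmem1 : ((0 : ℕ), p) ∈ Finset.HasAntidiagonal.antidiagonal p := by simp
      rw [Finset.sum_eq_add_sum_sdiff_singleton_of_mem hmem1]
      have hmem2 : ((p : ℕ), 0) ∈ Finset.HasAntidiagonal.antidiagonal p \ {((0:ℕ), p)} := by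
        have := hp.out.pos
        simp only [Finset.mem_sdiff, Finset.HasAntidiagonal.mem_antidiagonal, Finset.mem_singleton]
        constructor
        · omega
        · intro h
          injection h with h1 h2
          omega
      rw [Finset.sum_eq_add_sum_sdiff_singleton_of_mem hmem2]
      have hrest : ∀ ij ∈ (Finset.HasAntidiagonal.antidiagonal p \ {((0:ℕ), p)}) \ {((p:ℕ), 0)},
          ((p.choose ij.1 * (a * p + r).choose ij.2 : ℕ) : ZMod p) = 0 := by
        intro ij hij
        simp only [Finset.mem_sdiff, Finset.HasAntidiagonal.mem_antidiagonal, Finset.mem_singleton] at hij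
        obtain ⟨⟨hsum, hne1⟩, hne2⟩ := hij
        have h1 : ij.1 ≠ 0 := by
          intro h
          apply hne1
          have : ij.2 = p := by omega
          rw [← h, ← this]
        have h2 : ij.1 < p := by
          rcases Nat.lt_or_ge ij.1 p with h | h
          · exact h
          · exfalso
            apply hne2
            have h1' : ij.1 = p := by omega
            have h2' : ij.2 = 0 := by omega
            rw [← h1', ← h2']
        have hdvd : p ∣ p.choose ij.1 * (a * p + r).choose ij.2 :=
          dvd_mul_of_dvd_left (hp.out.dvd_choose_self h1 h2) _
        exact (ZMod.natCast_eq_zero_iff _ _).mpr hdvd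
      rw [Finset.sum_congr rfl hrest, Finset.sum_const_zero, add_zero]
      simp only [Nat.choose_zero_right, Nat.choose_self, one_mul, mul_one]
      rw [ih]
      push_cast
      ring

end Stmt2

namespace Stmt2

variable {p : ℕ} [hp : Fact p.Prime]

local notation "G" => (Fin 3 → ZMod p)

lemma subset_compl_iff_disj {ι : Type} [Fintype ι] [DecidableEq ι] (s t : Finset ι) :
    s ⊆ tᶜ ↔ Disjoint s t := by
  rw [← Finset.le_iff_subset]
  exact le_compl_iff_disjoint_right

/-- THE core lemma: a family of 5p-3 elements of (ZMod p)^3 with no zero-sum subfamily of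
size p or 2p is impossible. -/
theorem lstar_core {ι : Type} [Fintype ι] [DecidableEq ι] (v : ι → G)
    (hcard : Fintype.card ι = 5 * p - 3)
    (hno : ∀ S : Finset ι, (∑ i ∈ S, v i) = 0 → S.card ≠ p ∧ S.card ≠ 2 * p) : False := by
  have hp2 : 2 ≤ p := hp.out.two_le
  -- classification of p-divisible zero-sums
  have hclass : ∀ S : Finset ι, (∑ i ∈ S, v i) = 0 → p ∣ S.card →
      S.card = 0 ∨ S.card = 3 * p := by
    intro S hS0 hSd
    obtain ⟨j, hj⟩ := hSd
    have hle : S.card ≤ 5 * p - 3 := hcard ▸ Finset.card_le_univ S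
    have hj4 : j ≤ 4 := by
      by_contra hj5
      push_neg at hj5
      have : p * 5 ≤ p * j := Nat.mul_le_mul_left p hj5
      omega
    interval_cases j
    · left; omega
    · exact absurd (by omega : S.card = p) (hno S hS0).1
    · exact absurd (by omega : S.card = 2 * p) (hno S hS0).2
    · right; omega
    · exact absurd (no4p v hno S hS0 (by omega)) not_false
  -- the μ-relations
  have hrel : ∀ E : Finset ι, E.card ≤ p →
      (((Eᶜ.powerset.filter (fun S => (∑ i ∈ S, v i) = 0 ∧ S.card = 3 * p)).card : ZMod p)) = 1 := by
    intro E hE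
    apply mu_relation v Eᶜ
    · rw [Finset.card_compl, hcard]
      omega
    · intro S _ h1 h2
      exact hclass S h1 h2
  by_cases hp3 : p = 3
  · -- p = 3 endgame
    subst hp3
    have hcompl : ∀ E : Finset ι, E.card = 3 → (∑ i ∈ Eᶜ, v i) = 0 := by
      intro E hE
      have h1 := hrel E (by omega)
      have hne : (Eᶜ.powerset.filter
          (fun S => (∑ i ∈ S, v i) = 0 ∧ S.card = 3 * 3)).Nonempty := by
        rw [Finset.nonempty_iff_ne_empty]
        intro hemp
        rw [hemp] at h1
        simp at h1
      obtain ⟨S, hS⟩ := hne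
      rw [Finset.mem_filter, Finset.mem_powerset] at hS
      obtain ⟨hSsub, hS0, hScard⟩ := hS
      have hcc : Eᶜ.card = 9 := by
        rw [Finset.card_compl, hcard, hE]
      have : S = Eᶜ := Finset.eq_of_subset_of_card_le hSsub (by omega)
      rwa [← this]
    -- all values are equal
    have hall : ∀ z w : ι, v z = v w := by
      intro z w
      by_cases hzw : z = w
      · rw [hzw]
      · have hcd : 2 ≤ (Finset.univ \ {z, w} : Finset ι).card := by
          have h2 : ({z, w} : Finset ι).card ≤ 2 := Finset.card_insert_le _ _ |>.trans (by simp)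
          have := Finset.card_sdiff_of_subset (Finset.subset_univ {z, w})
          rw [Finset.card_univ, hcard] at this
          omega
        obtain ⟨D, hDsub, hDcard⟩ := Finset.exists_subset_card_eq hcd
        have hzD : z ∉ D := by
          intro h
          have := hDsub h
          simp at this
        have hwD : w ∉ D := by
          intro h
          have := hDsub h
          simp at this
        have hE := hcompl (insert z D) (by rw [Finset.card_insert_of_notMem hzD, hDcard])
        have hE' := hcompl (insert w D) (by rw [Finset.card_insert_of_notMem hwD, hDcard])
        have hsum : ∀ (E : Finset ι), (∑ i ∈ Eᶜ, v i) = 0 →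
            (∑ i ∈ E, v i) = ∑ i : ι, v i := by
          intro E hE0
          have := Finset.sum_compl_add_sum E v
          rw [hE0, zero_add] at this
          exact this
        have h1 := hsum _ hE
        have h2 := hsum _ hE'
        rw [Finset.sum_insert hzD] at h1
        rw [Finset.sum_insert hwD] at h2
        have : v z + ∑ i ∈ D, v i = v w + ∑ i ∈ D, v i := by rw [h1, h2]
        exact add_right_cancel this
    -- contradiction: any 3 indices give a zero-sum of size p = 3
    have h3le : 3 ≤ (Finset.univ : Finset ι).card := by
      rw [Finset.card_univ, hcard]; omega
    obtain ⟨E₀, -, hE₀card⟩ := Finset.exists_subset_card_eq h3le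
    have hne : E₀.Nonempty := Finset.card_pos.mp (by omega)
    obtain ⟨z₀, hz₀⟩ := hne
    have hsum0 : (∑ i ∈ E₀, v i) = 0 := by
      have : ∀ i ∈ E₀, v i = v z₀ := fun i _ => hall i z₀
      rw [Finset.sum_congr rfl this, Finset.sum_const, hE₀card]
      funext j
      simp only [Pi.smul_apply, Pi.zero_apply]
      rw [nsmul_eq_mul, ZMod.natCast_self, zero_mul]
    exact (hno E₀ hsum0).1 (by omega)
  · -- p ≠ 3 : double counting
    set Z3 := (Finset.univ : Finset ι).powerset.filter
      (fun S => (∑ i ∈ S, v i) = 0 ∧ S.card = 3 * p) with hZ3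
    have hZ1 : ((Z3.card : ZMod p)) = 1 := by
      have := hrel ∅ (by simp)
      rwa [Finset.compl_empty] at this
    -- the natural-number double count
    have hNat : ∑ E ∈ (Finset.univ : Finset ι).powersetCard p,
        (Z3.filter (fun S => Disjoint S E)).card
        = Z3.card * Nat.choose (2 * p - 3) p := by
      have hLHS : ∀ E ∈ (Finset.univ : Finset ι).powersetCard p,
          (Z3.filter (fun S => Disjoint S E)).card
          = ∑ S ∈ Z3, if Disjoint S E then 1 else 0 :=
        fun E _ => Finset.card_filter _ _
      rw [Finset.sum_congr rfl hLHS, Finset.sum_comm]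
      have hIn : ∀ S ∈ Z3, (∑ E ∈ (Finset.univ : Finset ι).powersetCard p,
          if Disjoint S E then 1 else 0) = Nat.choose (2 * p - 3) p := by
        intro S hS
        rw [← Finset.card_filter]
        have hfe : ((Finset.univ : Finset ι).powersetCard p).filter (fun E => Disjoint S E)
            = Sᶜ.powersetCard p := by
          ext E
          simp only [Finset.mem_filter, Finset.mem_powersetCard]
          constructor
          · rintro ⟨⟨-, hc⟩, hd⟩
            exact ⟨(subset_compl_iff_disj E S).mpr hd.symm, hc⟩
          · rintro ⟨hsub, hc⟩
            exact ⟨⟨Finset.subset_univ E, hc⟩, ((subset_compl_iff_disj E S).mp hsub).symm⟩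
        rw [hfe, Finset.card_powersetCard]
        congr 1
        rw [Finset.card_compl, hcard]
        rw [hZ3, Finset.mem_filter] at hS
        rw [hS.2.2]
        omega
      rw [Finset.sum_congr rfl hIn, Finset.sum_const, smul_eq_mul]
    -- now cast to ZMod p
    have hcast : ((∑ E ∈ (Finset.univ : Finset ι).powersetCard p,
        (Z3.filter (fun S => Disjoint S E)).card : ℕ) : ZMod p)
        = ((Nat.choose (5 * p - 3) p : ℕ) : ZMod p) := by
      rw [Nat.cast_sum]
      have hone : ∀ E ∈ (Finset.univ : Finset ι).powersetCard p,
          (((Z3.filter (fun S => Disjoint S E)).card : ℕ) : ZMod p) = 1 := by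
        intro E hE
        rw [Finset.mem_powersetCard] at hE
        have heq : Z3.filter (fun S => Disjoint S E)
            = Eᶜ.powerset.filter (fun S => (∑ i ∈ S, v i) = 0 ∧ S.card = 3 * p) := by
          ext S
          simp only [hZ3, Finset.mem_filter, Finset.mem_powerset]
          constructor
          · rintro ⟨⟨-, h1, h2⟩, hd⟩
            exact ⟨(subset_compl_iff_disj S E).mpr hd, h1, h2⟩
          · rintro ⟨hsub, h1, h2⟩
            exact ⟨⟨Finset.subset_univ S, h1, h2⟩, (subset_compl_iff_disj S E).mp hsub⟩
        rw [heq]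
        exact hrel E (le_of_eq hE.2)
      rw [Finset.sum_congr rfl hone, Finset.sum_const, nsmul_eq_mul, mul_one,
        Finset.card_powersetCard, Finset.card_univ, hcard]
    rw [hNat, Nat.cast_mul, hZ1, one_mul] at hcast
    -- contradiction via binomial values
    have hfinal : ((3 : ℕ) : ZMod p) = 0 := by
      rcases Nat.lt_or_ge p 3 with hplt | hpge
      · -- p = 2
        have hp2' : p = 2 := by omega
        subst hp2'
        rw [show (2 * 2 - 3 : ℕ) = 0 * 2 + 1 from rfl] at hcast
        rw [show (5 * 2 - 3 : ℕ) = 3 * 2 + 1 from rfl] at hcast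
        rw [choose_cast 0 1 (by omega), choose_cast 3 1 (by omega)] at hcast
        simpa using hcast.symm
      · have h5 : 5 * p - 3 = 4 * p + (p - 3) := by omega
        have h2 : 2 * p - 3 = 1 * p + (p - 3) := by omega
        rw [h5, h2, choose_cast 4 (p-3) (by omega), choose_cast 1 (p-3) (by omega)] at hcast
        -- (1 : ZMod p) = (4 : ZMod p) → (3 : ZMod p) = 0
        have : ((4 : ℕ) : ZMod p) - ((1 : ℕ) : ZMod p) = 0 := by rw [hcast]; ring
        rw [show ((4 : ℕ) : ZMod p) = ((1 : ℕ) : ZMod p) + ((3 : ℕ) : ZMod p) from by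
          push_cast; ring] at this
        rwa [add_sub_cancel_left] at this
    have hdvd : p ∣ 3 := (ZMod.natCast_eq_zero_iff _ _).mp hfinal
    exact hp3 ((Nat.prime_dvd_prime_iff_eq hp.out (by norm_num)).mp hdvd)

end Stmt2

namespace Stmt2

variable {p : ℕ} [hp : Fact p.Prime]

local notation "G" => (Fin 3 → ZMod p)

/-- selecting positions from a list gives a sub-multiset -/
lemma sel_le (l : List (Fin 3 → ZMod p)) (S : Finset (Fin l.length)) :
    (S.val.map l.get : Multiset G) ≤ (l : Multiset G) := by
  have h1 : S.val = ↑(S.sort (· ≤ ·)) := (Finset.sort_eq S (· ≤ ·)).symm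
  rw [h1, Multiset.map_coe, Multiset.coe_le]
  have hpw : (S.sort (· ≤ ·)).Pairwise (· < ·) := (Finset.sortedLT_sort S).pairwise
  have := List.map_getElem_sublist (l := l) (is := S.sort (· ≤ ·)) hpw
  apply List.Sublist.subperm
  have hfun : (S.sort (· ≤ ·)).map l.get = (S.sort (· ≤ ·)).map (fun x => l[(x : Fin l.length)]) := by
    apply List.map_congr_left
    intro i _
    rfl
  rw [hfun]
  exact this

/-- sub-multiset of prescribed size -/
lemma exists_sub_card {α : Type} (s : Multiset α) {n : ℕ} (h : n ≤ Multiset.card s) :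
    ∃ u ≤ s, Multiset.card u = n := by
  refine ⟨↑(s.toList.take n), ?_, ?_⟩
  · calc (↑(s.toList.take n) : Multiset α) ≤ ↑s.toList := by
          rw [Multiset.coe_le]
          exact (List.take_sublist n s.toList).subperm
      _ = s := Multiset.coe_toList s
  · rw [Multiset.coe_card, List.length_take, Multiset.length_toList]
    omega

/-- THE lemma: any multiset of 5p-3 elements has a zero-sum submultiset of size p or 2p -/
theorem lstar (J : Multiset G) (hJ : Multiset.card J = 5 * p - 3) :
    ∃ T ≤ J, T.sum = 0 ∧ (Multiset.card T = p ∨ Multiset.card T = 2 * p) := by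
  by_contra hcon
  push_neg at hcon
  have hcard : Fintype.card (Fin J.toList.length) = 5 * p - 3 := by
    rw [Fintype.card_fin, Multiset.length_toList, hJ]
  apply lstar_core (J.toList.get) hcard
  intro S hS0
  set T : Multiset G := S.val.map J.toList.get with hT
  have hTle : T ≤ J := by
    have := sel_le J.toList S
    rwa [Multiset.coe_toList] at this
  have hTsum : T.sum = 0 := by
    rw [hT, ← Finset.sum_eq_multiset_sum]
    exact hS0
  have hTcard : Multiset.card T = S.card := by
    rw [hT, Multiset.card_map]
    rfl
  have := hcon T hTle hTsum
  rwa [hTcard] at this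

end Stmt2

namespace Stmt2

set_option linter.unusedSectionVars false

variable {p : ℕ} [hp : Fact p.Prime]

local notation "G" => (Fin 3 → ZMod p)

lemma msum_card (s : Multiset (Multiset G)) :
    Multiset.card s.sum = (s.map Multiset.card).sum := by
  induction s using Multiset.induction with
  | empty => simp
  | cons a t ih => simp [ih]

lemma msum_sum (s : Multiset (Multiset G)) :
    (s.sum).sum = (s.map Multiset.sum).sum := by
  induction s using Multiset.induction with
  | empty => simp
  | cons a t ih => simp [ih]

lemma sum_le_sum_of_le (u s : Multiset (Multiset G)) (h : u ≤ s) : u.sum ≤ s.sum := by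
  obtain ⟨w, rfl⟩ := Multiset.le_iff_exists_add.mp h
  rw [Multiset.sum_add]
  exact Multiset.le_add_right _ _

/-- extraction: keep pulling out zero-sum pieces of size p or 2p while ≥ 5p-3 remain -/
theorem extract : ∀ (n : ℕ) (J : Multiset G), Multiset.card J = n →
    ∃ PS : Multiset (Multiset G),
      (∀ T ∈ PS, T.sum = 0 ∧ (Multiset.card T = p ∨ Multiset.card T = 2 * p)) ∧
      PS.sum ≤ J ∧ Multiset.card J ≤ Multiset.card PS.sum + (5 * p - 4) := by
  intro n
  induction n using Nat.strong_induction_on with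
  | _ n ih =>
    intro J hJ
    have hp2 : 2 ≤ p := hp.out.two_le
    rcases Nat.lt_or_ge (Multiset.card J) (5 * p - 3) with hsmall | hbig
    · exact ⟨0, by simp, by simp, by simp; omega⟩
    · obtain ⟨J', hJ'le, hJ'card⟩ := exists_sub_card J hbig
      obtain ⟨T, hTle, hTsum, hTcard⟩ := lstar J' hJ'card
      have hTJ : T ≤ J := hTle.trans hJ'le
      have hTpos : 0 < Multiset.card T := by rcases hTcard with h | h <;> omega
      have hlt : Multiset.card (J - T) < n := by
        rw [Multiset.card_sub hTJ]
        omega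
      obtain ⟨PS', hPS'prop, hPS'le, hPS'card⟩ := ih _ hlt (J - T) rfl
      refine ⟨T ::ₘ PS', ?_, ?_, ?_⟩
      · intro T' hT'
        rcases Multiset.mem_cons.mp hT' with rfl | h
        · exact ⟨hTsum, hTcard⟩
        · exact hPS'prop T' h
      · rw [Multiset.sum_cons]
        calc T + PS'.sum ≤ T + (J - T) := add_le_add_right hPS'le T
          _ = J := add_tsub_cancel_of_le hTJ
      · rw [Multiset.sum_cons, Multiset.card_add]
        have h1 : Multiset.card (J - T) = Multiset.card J - Multiset.card T :=
          Multiset.card_sub hTJ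
        have h2 : Multiset.card T ≤ Multiset.card J := Multiset.card_le_card hTJ
        omega

/-- the main theorem, in namespace form -/
theorem main (I : Multiset G) (hI : Multiset.card I = 8 * p - 3) :
    ∃ T ≤ I, Multiset.card T = 4 * p ∧ T.sum = 0 := by
  have hp2 : 2 ≤ p := hp.out.two_le
  obtain ⟨PS, hprop, hle, hcard⟩ := extract (Multiset.card I) I rfl
  set P1 := PS.filter (fun T => Multiset.card T = p) with hP1
  set P2 := PS.filter (fun T => ¬ Multiset.card T = p) with hP2
  have hsplit : P1 + P2 = PS := Multiset.filter_add_not _ PS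
  have hP2card : ∀ T ∈ P2, Multiset.card T = 2 * p := by
    intro T hT
    rw [hP2, Multiset.mem_filter] at hT
    rcases (hprop T hT.1).2 with h | h
    · exact absurd h hT.2
    · exact h
  have hP1card : ∀ T ∈ P1, Multiset.card T = p := by
    intro T hT
    rw [hP1, Multiset.mem_filter] at hT
    exact hT.2
  set a := Multiset.card P1 with ha
  set b := Multiset.card P2 with hb
  -- total size of the pieces
  have htot : Multiset.card PS.sum = a * p + b * (2 * p) := by
    rw [← hsplit, Multiset.sum_add, Multiset.card_add]
    congr 1
    · rw [msum_card, Multiset.map_congr rfl (fun T hT => hP1card T hT),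
        Multiset.map_const', Multiset.sum_replicate, smul_eq_mul]
    · rw [msum_card, Multiset.map_congr rfl (fun T hT => hP2card T hT),
        Multiset.map_const', Multiset.sum_replicate, smul_eq_mul]
  have hab : 4 ≤ a + 2 * b := by
    by_contra hcon
    push_neg at hcon
    have h1 : a * p + b * (2 * p) = (a + 2 * b) * p := by ring
    have h2 : (a + 2 * b) * p ≤ 3 * p := Nat.mul_le_mul_right p (by omega)
    omega
  -- sum of all pieces is zero-sum
  have hzero : ∀ (u : Multiset (Multiset G)), (∀ T ∈ u, Multiset.sum T = 0) →
      (u.sum).sum = 0 := by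
    intro u hu
    rw [msum_sum, Multiset.map_congr rfl hu, Multiset.map_const', Multiset.sum_replicate,
      smul_zero]
  have hP1le : P1.sum ≤ I := by
    calc P1.sum ≤ PS.sum := by
          rw [← hsplit, Multiset.sum_add]; exact Multiset.le_add_right _ _
      _ ≤ I := hle
  have hP2le : P2.sum ≤ I := by
    calc P2.sum ≤ PS.sum := by
          rw [← hsplit, Multiset.sum_add]; exact Multiset.le_add_left _ _
      _ ≤ I := hle
  -- helper: take k pieces from a homogeneous pile
  have hpick : ∀ (Q : Multiset (Multiset G)) (c k : ℕ), (∀ T ∈ Q, Multiset.card T = c) →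
      (∀ T ∈ Q, Multiset.sum T = 0) → k ≤ Multiset.card Q → Q.sum ≤ I →
      ∃ T ≤ I, Multiset.card T = k * c ∧ T.sum = 0 := by
    intro Q c k hc hz hk hQI
    obtain ⟨u, huQ, hucard⟩ := exists_sub_card Q hk
    refine ⟨u.sum, (sum_le_sum_of_le u Q huQ).trans hQI, ?_, ?_⟩
    · rw [msum_card, Multiset.map_congr rfl (fun T hT => hc T (Multiset.mem_of_le huQ hT)),
        Multiset.map_const', Multiset.sum_replicate, smul_eq_mul, hucard]
    · exact hzero u (fun T hT => hz T (Multiset.mem_of_le huQ hT))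
  have hP1z : ∀ T ∈ P1, Multiset.sum T = 0 := by
    intro T hT
    rw [hP1, Multiset.mem_filter] at hT
    exact (hprop T hT.1).1
  have hP2z : ∀ T ∈ P2, Multiset.sum T = 0 := by
    intro T hT
    rw [hP2, Multiset.mem_filter] at hT
    exact (hprop T hT.1).1
  rcases Nat.lt_or_ge b 2 with hblt | hbge
  · rcases Nat.eq_zero_or_pos b with hb0 | hb1
    · -- b = 0 : a ≥ 4, take four p-pieces
      obtain ⟨T, hTI, hTc, hTz⟩ := hpick P1 p 4 hP1card hP1z (by omega) hP1le
      exact ⟨T, hTI, hTc, hTz⟩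
    · -- b = 1 : a ≥ 2, take two p-pieces and the one 2p-piece
      have hb1' : b = 1 := by omega
      obtain ⟨u, huQ, hucard⟩ := exists_sub_card P1 (n := 2) (by omega)
      refine ⟨u.sum + P2.sum, ?_, ?_, ?_⟩
      · calc u.sum + P2.sum ≤ P1.sum + P2.sum := by
              exact add_le_add_left (sum_le_sum_of_le u P1 huQ) _
          _ = PS.sum := by rw [← hsplit, Multiset.sum_add]
          _ ≤ I := hle
      · rw [Multiset.card_add]
        have h1 : Multiset.card u.sum = 2 * p := by
          rw [msum_card, Multiset.map_congr rfl
            (fun T hT => hP1card T (Multiset.mem_of_le huQ hT)),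
            Multiset.map_const', Multiset.sum_replicate, smul_eq_mul, hucard]
        have h2 : Multiset.card P2.sum = 2 * p := by
          rw [msum_card, Multiset.map_congr rfl (fun T hT => hP2card T hT),
            Multiset.map_const', Multiset.sum_replicate, smul_eq_mul, ← hb, hb1', one_mul]
        omega
      · rw [Multiset.sum_add]
        rw [hzero u (fun T hT => hP1z T (Multiset.mem_of_le huQ hT)), hzero P2 hP2z, add_zero]
  · -- b ≥ 2 : take two 2p-pieces
    obtain ⟨T, hTI, hTc, hTz⟩ := hpick P2 (2 * p) 2 hP2card hP2z (by omega) hP2le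
    refine ⟨T, hTI, by omega, hTz⟩

end Stmt2

theorem stmt_2 (p : ℕ) (hp : p.Prime) (I : Multiset (Fin 3 → ZMod p))
    (hI : Multiset.card I = 8 * p - 3) :
    ∃ T ≤ I, Multiset.card T = 4 * p ∧ T.sum = 0 := by
  haveI : Fact p.Prime := ⟨hp⟩
  exact Stmt2.main I hI
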